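/- Let A be a finite boolean algebra contained as a subalgebra in boolean algebras B_1, …, B_n, with measures μ_i on B_i agreeing on A. Define the free amalgam ⊗_A B_l with atoms the formal products b_1 ⊗ ⋯ ⊗ b_n where b_i is an atom of B_i and all b_i lie below a common atom a of A, with measure μ(b_1 ⊗ ⋯ ⊗ b_n) = μ_1(b_1)⋯μ_n(b_n)/μ_1(a)^{n-1}. Then for each i, the map π_i sending b ∈ B_i with b ≤ a (a an atom of A) to a ⊗ ⋯ ⊗ a ⊗ b ⊗ a ⊗ ⋯ ⊗ a (b in the i-th position) is a measure preserving embedding of boolean algebras, and π_i ∘ ι_i = π_j ∘ ι_j on A where ι_i is the inclusion of A into B_i. -/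

import Mathlib

/-- `μ` is a finitely additive probability measure on the boolean algebra `B`. -/
def IsFinAddProb {B : Type*} [BooleanAlgebra B] (μ : B → ℝ) : Prop :=
  μ ⊥ = 0 ∧ μ ⊤ = 1 ∧ ∀ x y : B, x ⊓ y = ⊥ → μ (x ⊔ y) = μ x + μ y

/-- `e` is an embedding of boolean algebras. -/
def IsBAEmbedding {B C : Type*} [BooleanAlgebra B] [BooleanAlgebra C] (e : B → C) : Prop :=
  Function.Injective e ∧ e ⊥ = ⊥ ∧ e ⊤ = ⊤ ∧
    (∀ x y : B, e (x ⊔ y) = e x ⊔ e y) ∧ ∀ x y : B, e (x ⊓ y) = e x ⊓ e y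

section BA
variable {B : Type*} [BooleanAlgebra B]

lemma atom_le_sup' {c x y : B} (hc : IsAtom c) (h : c ≤ x ⊔ y) : c ≤ x ∨ c ≤ y := by
  by_cases hx : c ≤ x
  · exact Or.inl hx
  · right
    have h1 : c ⊓ x = ⊥ := by
      rcases hc.le_iff.mp (inf_le_left : c ⊓ x ≤ c) with h1 | h1
      · exact h1
      · exact absurd (h1 ▸ inf_le_right) hx
    have : c = c ⊓ y := by
      calc c = c ⊓ (x ⊔ y) := (inf_eq_left.mpr h).symm
        _ = (c ⊓ x) ⊔ (c ⊓ y) := inf_sup_left c x y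
        _ = c ⊓ y := by rw [h1, bot_sup_eq]
    exact this.le.trans inf_le_right

lemma atom_inf_atom_ne {c d : B} (hc : IsAtom c) (hd : IsAtom d) (hne : c ≠ d) : c ⊓ d = ⊥ := by
  rcases hc.le_iff.mp (inf_le_left : c ⊓ d ≤ c) with h1 | h1
  · exact h1
  · have hcd : c ≤ d := h1 ▸ inf_le_right
    rcases hd.le_iff.mp hcd with h2 | h2
    · exact absurd h2 hc.1
    · exact absurd h2 hne

lemma atom_le_finsetSup {ι' : Type*} {s : Finset ι'} {f : ι' → B} {c : B} (hc : IsAtom c)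
    (h : c ≤ s.sup f) : ∃ x ∈ s, c ≤ f x := by
  classical
  induction s using Finset.induction_on with
  | empty => simp at h; exact absurd h hc.1
  | insert _ _ hx ih =>
    rw [Finset.sup_insert] at h
    rcases atom_le_sup' hc h with h1 | h1
    · exact ⟨_, Finset.mem_insert_self _ _, h1⟩
    · obtain ⟨x, hxs, hcx⟩ := ih h1
      exact ⟨x, Finset.mem_insert_of_mem hxs, hcx⟩

variable [Fintype B]

lemma exists_atom_le' {b : B} (hb : b ≠ ⊥) : ∃ c, IsAtom c ∧ c ≤ b :=
  (eq_bot_or_exists_atom_le b).resolve_left hb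

open Classical in
noncomputable def atomsBelow (b : B) : Finset B :=
  Finset.univ.filter (fun c => IsAtom c ∧ c ≤ b)

lemma mem_atomsBelow {c b : B} : c ∈ atomsBelow b ↔ IsAtom c ∧ c ≤ b := by
  simp [atomsBelow]

lemma le_of_atoms_le {b b' : B} (h : ∀ c, IsAtom c → c ≤ b → c ≤ b') : b ≤ b' := by
  by_contra hle
  have hne : b \ b' ≠ ⊥ := fun h0 => hle (sdiff_eq_bot_iff.mp h0)
  obtain ⟨c, hc, hcle⟩ := exists_atom_le' hne
  have h1 : c ≤ b' := h c hc (hcle.trans sdiff_le)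
  have h2 : c ≤ b'ᶜ := hcle.trans (by rw [sdiff_eq]; exact inf_le_right)
  exact hc.1 (le_bot_iff.mp ((le_inf h1 h2).trans_eq inf_compl_eq_bot))

open Classical in
lemma atomsBelow_sdiff {c b : B} (hc : IsAtom c) (hcb : c ≤ b) :
    atomsBelow (b \ c) = (atomsBelow b).erase c := by
  ext d
  simp only [mem_atomsBelow, Finset.mem_erase]
  constructor
  · rintro ⟨hd, hdle⟩
    refine ⟨fun hdc => ?_, hd, hdle.trans sdiff_le⟩
    subst hdc
    have : d ≤ dᶜ := hdle.trans (by rw [sdiff_eq]; exact inf_le_right)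
    exact hd.1 (le_bot_iff.mp ((le_inf le_rfl this).trans_eq inf_compl_eq_bot))
  · rintro ⟨hdc, hd, hdle⟩
    refine ⟨hd, ?_⟩
    have h1 : d ⊓ c = ⊥ := atom_inf_atom_ne hd hc hdc
    rw [sdiff_eq]
    exact le_inf hdle (le_compl_iff_disjoint_right.mpr (disjoint_iff.mpr h1))

end BA

section BA2
variable {B : Type*} [BooleanAlgebra B] [Fintype B]

lemma meas_eq_sum_aux (μ : B → ℝ) (hμ : IsFinAddProb μ) :
    ∀ (N : ℕ) (b : B), (atomsBelow b).card ≤ N → μ b = ∑ c ∈ atomsBelow b, μ c := by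
  classical
  intro N
  induction N with
  | zero =>
    intro b hb
    have hempty : atomsBelow b = ∅ := Finset.card_eq_zero.mp (Nat.le_zero.mp hb)
    have hbot : b = ⊥ := by
      by_contra h
      obtain ⟨c, hc, hcle⟩ := exists_atom_le' h
      have : c ∈ atomsBelow b := mem_atomsBelow.mpr ⟨hc, hcle⟩
      simp [hempty] at this
    subst hbot
    rw [hempty, hμ.1, Finset.sum_empty]
  | succ N ih =>
    intro b hb
    by_cases hbot : b = ⊥
    · have hempty : atomsBelow b = ∅ := by
        ext c
        simp only [mem_atomsBelow, Finset.notMem_empty, iff_false, not_and]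
        intro hc hcle
        exact hc.1 (le_bot_iff.mp (hbot ▸ hcle))
      subst hbot
      rw [hempty, hμ.1, Finset.sum_empty]
    · obtain ⟨c, hc, hcle⟩ := exists_atom_le' hbot
      have hmem : c ∈ atomsBelow b := mem_atomsBelow.mpr ⟨hc, hcle⟩
      have hsplit : b = c ⊔ b \ c := (sup_sdiff_cancel' le_rfl hcle).symm
      have hdisj : c ⊓ b \ c = ⊥ := by
        rw [sdiff_eq, ← inf_assoc, inf_comm c b, inf_assoc]
        simp
      have hμb : μ b = μ c + μ (b \ c) := by
        have := hμ.2.2 c (b \ c) hdisj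
        rw [← hsplit] at this
        exact this
      have hcard : (atomsBelow (b \ c)).card ≤ N := by
        rw [atomsBelow_sdiff hc hcle, Finset.card_erase_of_mem hmem]
        omega
      rw [hμb, ih _ hcard, atomsBelow_sdiff hc hcle, Finset.add_sum_erase _ _ hmem]

lemma meas_eq_sum (μ : B → ℝ) (hμ : IsFinAddProb μ) (b : B) :
    μ b = ∑ c ∈ atomsBelow b, μ c :=
  meas_eq_sum_aux μ hμ _ b le_rfl

lemma le_sup_atomsBelow (b : B) : b ≤ (atomsBelow b).sup id :=
  le_of_atoms_le fun c hc hcb => Finset.le_sup (f := id) (mem_atomsBelow.mpr ⟨hc, hcb⟩)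

end BA2

section Embed
variable {A' B' : Type*} [BooleanAlgebra A'] [BooleanAlgebra B'] {e : A' → B'}

lemma embed_mono (he : IsBAEmbedding e) {x y : A'} (h : x ≤ y) : e x ≤ e y := by
  have := he.2.2.2.1 x y
  rw [sup_eq_right.mpr h] at this
  exact le_sup_left.trans_eq this.symm

lemma embed_ne_bot (he : IsBAEmbedding e) {a : A'} (ha : a ≠ ⊥) : e a ≠ ⊥ := fun h =>
  ha (he.1 (h.trans he.2.1.symm))

lemma embed_finsetSup (he : IsBAEmbedding e) {ι' : Type*} (s : Finset ι') (f : ι' → A') :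
    e (s.sup f) = s.sup (fun x => e (f x)) := by
  classical
  induction s using Finset.induction_on with
  | empty => simpa using he.2.1
  | insert _ _ hx ih => rw [Finset.sup_insert, Finset.sup_insert, he.2.2.2.1, ih]

lemma exists_atom_over [Fintype A'] (he : IsBAEmbedding e) {c : B'} (hc : IsAtom c) :
    ∃ a : A', IsAtom a ∧ c ≤ e a := by
  have h1 : c ≤ e ((atomsBelow (⊤ : A')).sup id) :=
    le_top.trans ((he.2.2.1.symm.le).trans (embed_mono he (le_sup_atomsBelow ⊤)))
  rw [embed_finsetSup he] at h1
  obtain ⟨a, has, hca⟩ := atom_le_finsetSup hc h1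
  exact ⟨a, (mem_atomsBelow.mp has).1, hca⟩

end Embed

/-- The atoms of the free amalgam `⊗_A B_l`: formal products `b_1 ⊗ ⋯ ⊗ b_n` of atoms
`b_i` of `B i` all lying below a common atom `a` of `A` (via the embeddings `ι i`). -/
def AmalgAtom {n : ℕ} {A : Type*} [BooleanAlgebra A] {B : Fin n → Type*}
    [∀ i, BooleanAlgebra (B i)] (ι : ∀ i, A → B i) : Type _ :=
  {t : ∀ i, B i // (∀ i, IsAtom (t i)) ∧ ∃ a : A, IsAtom a ∧ ∀ i, t i ≤ ι i a}

/-- The free amalgam itself is (identified with) the boolean algebra `Set (AmalgAtom ι)` of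
sets of its atoms.  The canonical map `π i` of `B i` into the free amalgam sends `b` to the
join of all formal products whose `i`-th coordinate lies below `b`; for `b ≤ ι i a` with `a`
an atom of `A`, this is the element `a ⊗ ⋯ ⊗ a ⊗ b ⊗ a ⊗ ⋯ ⊗ a` (`b` in the `i`-th spot). -/
def amalgEmbed {n : ℕ} {A : Type*} [BooleanAlgebra A] {B : Fin n → Type*}
    [∀ i, BooleanAlgebra (B i)] (ι : ∀ i, A → B i) (i : Fin n) (b : B i) :
    Set (AmalgAtom ι) :=
  {t : AmalgAtom ι | t.1 i ≤ b}

/-- The measure on the free amalgam determined by a weight function `w` on the atoms. -/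
noncomputable def amalgMeasure {n : ℕ} {A : Type*} [BooleanAlgebra A] {B : Fin n → Type*}
    [∀ i, BooleanAlgebra (B i)] (ι : ∀ i, A → B i) (w : AmalgAtom ι → ℝ)
    (s : Set (AmalgAtom ι)) : ℝ :=
  ∑' t : AmalgAtom ι, s.indicator w t

/-- Let `A` be a finite boolean algebra contained as a subalgebra in finite boolean algebras
`B 1, …, B n` via embeddings `ι i`, with finitely additive probability measures `μ i` on `B i`
(positive on nonzero elements) agreeing on `A`.  Form the free amalgam `⊗_A B_l` with atoms
the formal products `b_1 ⊗ ⋯ ⊗ b_n` (`b_i` an atom of `B i`, all below a common atom `a` of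
`A`), weighted by `w(b_1 ⊗ ⋯ ⊗ b_n) = μ_1(b_1)⋯μ_n(b_n)/μ_1(a)^(n-1)`.  Then each `π i` is a
measure preserving embedding of boolean algebras, and `π i ∘ ι i = π j ∘ ι j` on `A`. -/
theorem stmt6 {n : ℕ} (hn : 1 ≤ n) {A : Type*} [BooleanAlgebra A] [Fintype A]
    {B : Fin n → Type*} [∀ i, BooleanAlgebra (B i)] [∀ i, Fintype (B i)]
    (ι : ∀ i, A → B i) (hι : ∀ i, IsBAEmbedding (ι i))
    (μ : ∀ i, B i → ℝ) (hμ : ∀ i, IsFinAddProb (μ i))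
    (hpos : ∀ i, ∀ x : B i, x ≠ ⊥ → 0 < μ i x)
    (hagree : ∀ i j : Fin n, ∀ a : A, μ i (ι i a) = μ j (ι j a))
    (w : AmalgAtom ι → ℝ)
    (hw : ∀ (t : AmalgAtom ι) (a : A), IsAtom a → (∀ i, t.1 i ≤ ι i a) →
      w t = (∏ i, μ i (t.1 i)) / (μ ⟨0, hn⟩ (ι ⟨0, hn⟩ a)) ^ (n - 1)) :
    (∀ i, IsBAEmbedding (amalgEmbed ι i)) ∧
    (∀ (i : Fin n) (b : B i), amalgMeasure ι w (amalgEmbed ι i b) = μ i b) ∧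
    (∀ (i j : Fin n) (a : A), amalgEmbed ι i (ι i a) = amalgEmbed ι j (ι j a)) := by
  classical
  have uniq : ∀ (k : Fin n) (c : B k) (a a' : A), c ≠ ⊥ → IsAtom a → IsAtom a' →
      c ≤ ι k a → c ≤ ι k a' → a = a' := by
    intro k c a a' hc ha ha' h1 h2
    by_contra hne
    have h3 : c ≤ ι k (a ⊓ a') := ((hι k).2.2.2.2 a a').symm ▸ le_inf h1 h2
    rw [atom_inf_atom_ne ha ha' hne, (hι k).2.1] at h3
    exact hc (le_bot_iff.mp h3)
  have build : ∀ (i : Fin n) (c : B i), IsAtom c → ∃ t : AmalgAtom ι, t.1 i = c := by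
    intro i c hc
    obtain ⟨a, ha, hca⟩ := exists_atom_over (hι i) hc
    have hne : ∀ j, ι j a ≠ ⊥ := fun j => embed_ne_bot (hι j) ha.1
    choose d hd1 hd2 using fun j => exists_atom_le' (hne j)
    refine ⟨⟨Function.update d i c, fun j => ?_, a, ha, fun j => ?_⟩,
      Function.update_self i c d⟩
    · by_cases h : j = i
      · subst h; simpa using hc
      · rw [Function.update_of_ne h]; exact hd1 j
    · by_cases h : j = i
      · subst h; simpa using hca
      · rw [Function.update_of_ne h]; exact hd2 j
  have part1 : ∀ i, IsBAEmbedding (amalgEmbed ι i) := by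
    intro i
    refine ⟨?_, ?_, ?_, ?_, ?_⟩
    · intro b b' hbb'
      have key : ∀ x y : B i, amalgEmbed ι i x = amalgEmbed ι i y → x ≤ y := by
        intro x y hxy
        refine le_of_atoms_le fun c hc hcx => ?_
        obtain ⟨t, ht⟩ := build i c hc
        have h1 : t ∈ amalgEmbed ι i x := by
          simp only [amalgEmbed, Set.mem_setOf_eq, ht]; exact hcx
        have h2 : t ∈ amalgEmbed ι i y := hxy ▸ h1
        simpa only [amalgEmbed, Set.mem_setOf_eq, ht] using h2
      exact le_antisymm (key _ _ hbb') (key _ _ hbb'.symm)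
    · ext t
      simp only [amalgEmbed, Set.mem_setOf_eq, le_bot_iff, Set.bot_eq_empty,
        Set.mem_empty_iff_false, iff_false]
      exact (t.2.1 i).1
    · ext t
      simp only [amalgEmbed, Set.mem_setOf_eq, le_top, Set.top_eq_univ, Set.mem_univ]
    · intro x y
      ext t
      simp only [amalgEmbed, Set.mem_setOf_eq, Set.sup_eq_union, Set.mem_union]
      exact ⟨fun h => atom_le_sup' (t.2.1 i) h,
        fun h => h.elim (fun h => h.trans le_sup_left) (fun h => h.trans le_sup_right)⟩
    · intro x y
      ext t
      simp only [amalgEmbed, Set.mem_setOf_eq, Set.inf_eq_inter, Set.mem_inter_iff, le_inf_iff]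
  have part3 : ∀ (i j : Fin n) (a : A), amalgEmbed ι i (ι i a) = amalgEmbed ι j (ι j a) := by
    have key : ∀ (i j : Fin n) (a : A) (t : AmalgAtom ι), t.1 i ≤ ι i a → t.1 j ≤ ι j a := by
      intro i j a t h
      obtain ⟨hatoms, a', ha', hle⟩ := t.2
      have h1 : t.1 i ≤ ι i (a ⊓ a') := ((hι i).2.2.2.2 a a').symm ▸ le_inf h (hle i)
      have h2 : a ⊓ a' = a' := by
        rcases ha'.le_iff.mp (inf_le_right : a ⊓ a' ≤ a') with h2 | h2
        · exfalso
          rw [h2, (hι i).2.1] at h1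
          exact (hatoms i).1 (le_bot_iff.mp h1)
        · exact h2
      exact (hle j).trans (embed_mono (hι j) (inf_eq_right.mp h2))
    intro i j a
    ext t
    simp only [amalgEmbed, Set.mem_setOf_eq]
    exact ⟨key i j a t, key j i a t⟩
  haveI : Finite (AmalgAtom ι) := by unfold AmalgAtom; infer_instance
  haveI : Fintype (AmalgAtom ι) := Fintype.ofFinite _
  have hfiber : ∀ (i : Fin n) (c : B i) (a : A), IsAtom c → IsAtom a → c ≤ ι i a →
      ∀ t : AmalgAtom ι, t.1 i = c → ∀ j, t.1 j ≤ ι j a := by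
    intro i c a hc ha hca t ht j
    obtain ⟨hatoms, a', ha', hle⟩ := t.2
    have : a' = a := uniq i c a' a hc.1 ha' ha (ht ▸ hle i) hca
    exact this ▸ hle j
  have key : ∀ (i : Fin n) (c : B i), IsAtom c →
      ∑ t ∈ Finset.univ.filter (fun t : AmalgAtom ι => t.1 i = c), w t = μ i c := by
    intro i c hc
    obtain ⟨a, ha, hca⟩ := exists_atom_over (hι i) hc
    set M := μ ⟨0, hn⟩ (ι ⟨0, hn⟩ a) with hM
    have hMj : ∀ j, μ j (ι j a) = M := fun j => hagree j ⟨0, hn⟩ a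
    have hMpos : 0 < M := hpos _ _ (embed_ne_bot (hι _) ha.1)
    set S : ∀ j, Finset (B j) := Function.update (fun j => atomsBelow (ι j a)) i {c} with hS
    have hSi : S i = {c} := Function.update_self i _ _
    have hSj : ∀ j, j ≠ i → S j = atomsBelow (ι j a) := fun j h => Function.update_of_ne h _ _
    have hmem_pi : ∀ p ∈ Fintype.piFinset S, (∀ j, IsAtom (p j)) ∧ (∀ j, p j ≤ ι j a)
        ∧ p i = c := by
      intro p hp
      rw [Fintype.mem_piFinset] at hp
      have hpi : p i = c := by have := hp i; rwa [hSi, Finset.mem_singleton] at this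
      have h1 : ∀ j, IsAtom (p j) ∧ p j ≤ ι j a := by
        intro j
        by_cases h : j = i
        · subst h; rw [hpi]; exact ⟨hc, hca⟩
        · have := hp j; rw [hSj j h, mem_atomsBelow] at this; exact this
      exact ⟨fun j => (h1 j).1, fun j => (h1 j).2, hpi⟩
    have hbij : ∑ t ∈ Finset.univ.filter (fun t : AmalgAtom ι => t.1 i = c), w t
        = ∑ p ∈ Fintype.piFinset S, (∏ j, μ j (p j)) / M ^ (n - 1) := by
      refine Finset.sum_bij' (fun t _ => t.1)
        (fun p hp => ⟨p, (hmem_pi p hp).1, a, ha, (hmem_pi p hp).2.1⟩) ?_ ?_ ?_ ?_ ?_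
      · intro t ht
        have htc : t.1 i = c := (Finset.mem_filter.mp ht).2
        rw [Fintype.mem_piFinset]
        intro j
        by_cases h : j = i
        · subst h; rw [hSi, Finset.mem_singleton]; exact htc
        · rw [hSj j h, mem_atomsBelow]
          exact ⟨t.2.1 j, hfiber i c a hc ha hca t htc j⟩
      · intro p hp
        exact Finset.mem_filter.mpr ⟨Finset.mem_univ _, (hmem_pi p hp).2.2⟩
      · intro t ht; rfl
      · intro p hp; rfl
      · intro t ht
        have htc : t.1 i = c := (Finset.mem_filter.mp ht).2
        exact hw t a ha (hfiber i c a hc ha hca t htc)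
    rw [hbij, ← Finset.sum_div, ← Finset.prod_univ_sum]
    have herase : ∏ j ∈ Finset.univ.erase i, (∑ d ∈ S j, μ j d) = M ^ (n - 1) := by
      have h1 : ∀ j ∈ Finset.univ.erase i, (∑ d ∈ S j, μ j d) = M := by
        intro j hj
        rw [hSj j (Finset.ne_of_mem_erase hj), ← meas_eq_sum (μ j) (hμ j), hMj j]
      rw [Finset.prod_congr rfl h1, Finset.prod_const,
        Finset.card_erase_of_mem (Finset.mem_univ i), Finset.card_univ, Fintype.card_fin]
    rw [← Finset.mul_prod_erase Finset.univ _ (Finset.mem_univ i), herase, hSi,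
      Finset.sum_singleton]
    exact mul_div_cancel_right₀ _ (pow_ne_zero _ (ne_of_gt hMpos))
  have main : ∀ (i : Fin n) (b : B i),
      ∑ t ∈ Finset.univ.filter (fun t : AmalgAtom ι => t.1 i ≤ b), w t = μ i b := by
    intro i b
    rw [meas_eq_sum (μ i) (hμ i) b,
      ← Finset.sum_fiberwise_of_maps_to (t := atomsBelow b)
        (g := fun t : AmalgAtom ι => t.1 i)
        (fun t ht => mem_atomsBelow.mpr ⟨t.2.1 i, (Finset.mem_filter.mp ht).2⟩) w]
    refine Finset.sum_congr rfl fun c hcmem => ?_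
    obtain ⟨hc, hcb⟩ := mem_atomsBelow.mp hcmem
    rw [← key i c hc]
    congr 1
    rw [Finset.filter_filter]
    refine Finset.filter_congr fun t _ => ?_
    constructor
    · rintro ⟨_, h⟩; exact h
    · intro h; exact ⟨h.le.trans hcb, h⟩
  have part2 : ∀ (i : Fin n) (b : B i), amalgMeasure ι w (amalgEmbed ι i b) = μ i b := by
    intro i b
    rw [amalgMeasure, tsum_fintype, ← main i b, Finset.sum_filter]
    refine Finset.sum_congr rfl fun t _ => ?_
    simp only [Set.indicator_apply, amalgEmbed, Set.mem_setOf_eq]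
  exact ⟨part1, part2, part3⟩
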